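/- For a ≥ 1 real and p ∈ (0,1), define γ₂(p) = a²(a-1) - 2a(a²-1)p + a²(a+1)p² - 2a p^{a+1}. Then γ₂(p) ≥ 0 for all p ∈ (0,1). -/

import Mathlib

theorem gamma2_nonneg (a : ℝ) (ha : 1 ≤ a) (p : ℝ) (hp : p ∈ Set.Ioo (0 : ℝ) 1) :
    0 ≤ a ^ 2 * (a - 1) - 2 * a * (a ^ 2 - 1) * p + a ^ 2 * (a + 1) * p ^ 2
        - 2 * a * p ^ (a + 1) := by
  obtain ⟨hp0, hp1⟩ := hp
  set f : ℝ → ℝ := fun x => 1 + (a+1)*(x-1) + a*(a+1)*(x-1)^2/2 - x ^ (a+1) with hfdef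
  have hderiv : ∀ x ∈ Set.Ioo p 1,
      HasDerivAt f ((a+1) + a*(a+1)*(x-1) - (a+1)*x^a) x := by
    intro x hx
    have hx0 : x ≠ 0 := ne_of_gt (lt_trans hp0 hx.1)
    have h1 : HasDerivAt (fun y : ℝ => y ^ (a+1)) ((a+1) * x ^ ((a+1)-1)) x :=
      Real.hasDerivAt_rpow_const (Or.inl hx0)
    have h2 : HasDerivAt (fun y : ℝ => 1 + (a+1)*(y-1) + a*(a+1)*(y-1)^2/2)
        ((a+1)*1 + a*(a+1)*(2*(x-1)^1*1)/2) x := by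
      exact ((((hasDerivAt_id x).sub_const 1).const_mul (a+1)).const_add 1).add
        (((((hasDerivAt_id x).sub_const 1).pow 2).const_mul (a*(a+1))).div_const 2)
    have h3 := h2.sub h1
    have hexp : (a+1)-1 = a := by ring
    rw [hexp] at h3
    exact h3.congr_deriv (by ring)
  have hcont : ContinuousOn f (Set.Icc p 1) := by
    intro x hx
    have hx0 : x ≠ 0 := ne_of_gt (lt_of_lt_of_le hp0 hx.1)
    have hc1 : ContinuousAt (fun y : ℝ => 1 + (a+1)*(y-1) + a*(a+1)*(y-1)^2/2) x := by fun_prop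
    have hc2 : ContinuousAt (fun y : ℝ => y ^ (a+1)) x :=
      Real.continuousAt_rpow_const x (a+1) (Or.inl hx0)
    exact (hc1.sub hc2).continuousWithinAt
  have hint : interior (Set.Icc p 1) = Set.Ioo p 1 := interior_Icc
  have hanti : AntitoneOn f (Set.Icc p 1) := by
    apply antitoneOn_of_deriv_nonpos (convex_Icc p 1) hcont
    · rw [hint]
      intro x hx
      exact ((hderiv x hx).differentiableAt).differentiableWithinAt
    · rw [hint]
      intro x hx
      rw [(hderiv x hx).deriv]
      have hx0 : (0:ℝ) < x := lt_trans hp0 hx.1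
      have hbern : 1 + a * (x - 1) ≤ x ^ a := by
        have := one_add_mul_self_le_rpow_one_add (s := x - 1) (by linarith [hx0]) ha
        simpa using this
      nlinarith [hbern]
  have hle : f 1 ≤ f p :=
    hanti (Set.mem_Icc.2 ⟨le_refl p, le_of_lt hp1⟩) (Set.mem_Icc.2 ⟨le_of_lt hp1, le_refl 1⟩)
      (le_of_lt hp1)
  have hf1 : f 1 = 0 := by simp [hfdef, Real.one_rpow]
  rw [hf1] at hle
  have hfp : f p = 1 + (a+1)*(p-1) + a*(a+1)*(p-1)^2/2 - p ^ (a+1) := rfl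
  rw [hfp] at hle
  nlinarith [hle, mul_le_mul_of_nonneg_left hle (by linarith : (0:ℝ) ≤ 2*a)]
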